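/- Let G be a finite group and let K be a subgroup of G. If K is an Oliver group, then G is an Oliver group. Equivalently (contrapositive): if G contains an Oliver series, then every subgroup K of G contains an Oliver series. -/

import Mathlib

/-- A finite group `G` *contains an Oliver series* if there are subgroups
`P ≤ H ≤ G` with `P` normal in `H` and `H` normal in `G`, such that `|P|` is a prime
power `p ^ a` (with `a ≥ 0`, so the trivial group is allowed), `|G/H|` is a prime power
`q ^ b` (with `b ≥ 0`), and `H/P` is cyclic. -/
def HasOliverSeries (G : Type*) [Group G] : Prop :=
  ∃ P H : Subgroup G, ∃ _ : P ≤ H, ∃ _ : H.Normal, ∃ hP : (P.subgroupOf H).Normal,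
    (∃ p a : ℕ, p.Prime ∧ Nat.card P = p ^ a) ∧
    (∃ q b : ℕ, q.Prime ∧ Nat.card (G ⧸ H) = q ^ b) ∧
    (letI := hP; IsCyclic (H ⧸ P.subgroupOf H))

/-- A finite group is an *Oliver group* if it contains no Oliver series. -/
def IsOliverGroup (G : Type*) [Group G] : Prop := ¬ HasOliverSeries G

/-- If a subgroup `K` of a finite group `G` is an Oliver group, then `G` is an Oliver
group; equivalently (contrapositive), if `G` contains an Oliver series, then every
subgroup of `G` contains an Oliver series. -/
private lemma hos_subgroup {G : Type*} [Group G] [Finite G] (h : HasOliverSeries G)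
    (K : Subgroup G) : HasOliverSeries K := by
  obtain ⟨P, H, hPH, hHn, hPn, ⟨p, a, hp, hcP⟩, ⟨q, b, hq, hcQ⟩, hcyc⟩ := h
  have hle : P.subgroupOf K ≤ H.subgroupOf K := fun x hx => hPH hx
  have hnorm : ((P.subgroupOf K).subgroupOf (H.subgroupOf K)).Normal := by
    constructor
    intro n hn g
    simp only [Subgroup.mem_subgroupOf] at hn ⊢
    have := hPn.conj_mem ⟨((n : K) : G), n.2⟩ hn ⟨((g : K) : G), g.2⟩
    simpa [Subgroup.mem_subgroupOf] using this
  refine ⟨P.subgroupOf K, H.subgroupOf K, hle, hHn.subgroupOf K, hnorm, ?_, ?_, ?_⟩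
  · -- card of P ⊓ K is a power of p
    have hdvd : Nat.card (P.subgroupOf K) ∣ Nat.card P := by
      refine Subgroup.card_dvd_of_injective
        ({ toFun := fun x => (⟨((x : K) : G), x.2⟩ : P),
           map_one' := rfl, map_mul' := fun _ _ => rfl } : P.subgroupOf K →* P) ?_
      intro x y hxy
      simp only [MonoidHom.coe_mk, OneHom.coe_mk, Subtype.mk.injEq] at hxy
      exact Subtype.ext (Subtype.ext (by have h := congrArg (Subtype.val : P → G) hxy; exact h))
    rw [hcP] at hdvd
    obtain ⟨c, _, hc⟩ := (Nat.dvd_prime_pow hp).mp hdvd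
    exact ⟨p, c, hp, hc⟩
  · -- card of quotient
    set φ : K →* G ⧸ H := (QuotientGroup.mk' H).comp K.subtype with hφ
    have hker : φ.ker = H.subgroupOf K := by
      rw [hφ, ← MonoidHom.comap_ker, QuotientGroup.ker_mk']
      rfl
    have hdvd : Nat.card (↥K ⧸ H.subgroupOf K) ∣ Nat.card (G ⧸ H) := by
      rw [← hker]
      exact Subgroup.card_dvd_of_injective (QuotientGroup.kerLift φ)
        (QuotientGroup.kerLift_injective φ)
    rw [hcQ] at hdvd
    obtain ⟨c, _, hc⟩ := (Nat.dvd_prime_pow hq).mp hdvd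
    exact ⟨q, c, hq, hc⟩
  · -- cyclicity
    set ψ : (H.subgroupOf K) →* H ⧸ P.subgroupOf H :=
      (QuotientGroup.mk' (P.subgroupOf H)).comp
        ({ toFun := fun x => (⟨((x : K) : G), x.2⟩ : H),
           map_one' := rfl, map_mul' := fun _ _ => rfl } : H.subgroupOf K →* H) with hψ
    have hker : ψ.ker = (P.subgroupOf K).subgroupOf (H.subgroupOf K) := by
      ext x
      simp [hψ, MonoidHom.mem_ker, Subgroup.mem_subgroupOf, QuotientGroup.eq_one_iff]
    haveI : IsCyclic (↥(H.subgroupOf K) ⧸ ψ.ker) :=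
      isCyclic_of_surjective (MonoidHom.ofInjective (QuotientGroup.kerLift_injective ψ)).symm
        (MulEquiv.surjective _)
    exact isCyclic_of_surjective (QuotientGroup.quotientMulEquivOfEq hker)
      (MulEquiv.surjective _)

theorem isOliverGroup_of_subgroup (G : Type*) [Group G] [Finite G] :
    (∀ K : Subgroup G, IsOliverGroup K → IsOliverGroup G) ∧
    (HasOliverSeries G → ∀ K : Subgroup G, HasOliverSeries K) := by
  refine ⟨fun K hK hG => hK (hos_subgroup hG K), fun h K => hos_subgroup h K⟩
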